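/- Let Δ₁, Δ₂ be integral convex polytopes containing the origin with denominators D₁ and D₂ respectively (the smallest positive integers D_i such that w_{Δ_i}(M_{Δ_i}) ⊆ (1/D_i)ℕ). Then the denominator of Δ = Δ₁ ⊕ Δ₂ is lcm(D₁, D₂). -/

import Mathlib

open Set

/-- A (convex) polytope: the convex hull of a finite set of points. -/
def IsPolytope {V : Type*} [AddCommGroup V] [Module ℝ V] (P : Set V) : Prop :=
  ∃ s : Finset V, P = convexHull ℝ (s : Set V)

/-- A face of `P`: the intersection of `P` with a supporting hyperplane,
together with `P` itself and the empty set. -/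
def IsFaceOf {V : Type*} [AddCommGroup V] [Module ℝ V] (σ P : Set V) : Prop :=
  σ = P ∨ σ = ∅ ∨
    ∃ (l : V →ₗ[ℝ] ℝ) (c : ℝ), l ≠ 0 ∧ (∀ x ∈ P, l x ≤ c) ∧ σ = {x ∈ P | l x = c}

/-- The direct sum of `A ⊆ ℝ^{n₁}` and `B ⊆ ℝ^{n₂}`: the convex hull of
`(A × {0}) ∪ ({0} × B)` in `ℝ^{n₁+n₂}`. -/
def dSum {n₁ n₂ : ℕ} (A : Set (Fin n₁ → ℝ)) (B : Set (Fin n₂ → ℝ)) :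
    Set ((Fin n₁ → ℝ) × (Fin n₂ → ℝ)) :=
  convexHull ℝ ((fun x => (x, 0)) '' A ∪ (fun y => ((0 : Fin n₁ → ℝ), y)) '' B)

open Pointwise

/-- The cone over a set: `C(S) = { ρ • x : ρ ≥ 0, x ∈ S }`. -/
def rcone {V : Type*} [AddCommGroup V] [Module ℝ V] (S : Set V) : Set V :=
  {x | ∃ ρ : ℝ, 0 ≤ ρ ∧ ∃ s ∈ S, x = ρ • s}

/-- The weight of `u` with respect to `Δ`: `w_Δ(u) = inf { ρ ≥ 0 : u ∈ ρ Δ }`. -/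
noncomputable def wt {V : Type*} [AddCommGroup V] [Module ℝ V] (Δ : Set V) (u : V) : ℝ :=
  sInf {ρ : ℝ | 0 ≤ ρ ∧ u ∈ ρ • Δ}

/-- `x ∈ ℝ^n` is a lattice point (belongs to `ℤ^n`). -/
def isIntVec {n : ℕ} (x : Fin n → ℝ) : Prop := ∀ i, ∃ m : ℤ, x i = (m : ℝ)

/-- A polytope with vertices in the lattice described by the predicate `L`. -/
def IsIntegralPolytope {V : Type*} [AddCommGroup V] [Module ℝ V]
    (L : V → Prop) (Δ : Set V) : Prop :=
  ∃ s : Finset V, (∀ v ∈ s, L v) ∧ Δ = convexHull ℝ (s : Set V)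

/-- `D` is the denominator of `Δ` (with lattice predicate `L`): the smallest positive
integer such that the weight maps the monoid `M_Δ = C(Δ) ∩ ℤ^n` into `(1/D)ℕ`. -/
def IsDenomWith {V : Type*} [AddCommGroup V] [Module ℝ V]
    (L : V → Prop) (Δ : Set V) (D : ℕ) : Prop :=
  0 < D ∧ (∀ u ∈ rcone Δ, L u → ∃ m : ℕ, wt Δ u = (m : ℝ) / D) ∧
    ∀ D' : ℕ, 0 < D' → (∀ u ∈ rcone Δ, L u → ∃ m : ℕ, wt Δ u = (m : ℝ) / D') → D ≤ D'

section Helpers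
variable {V : Type*} [NormedAddCommGroup V] [NormedSpace ℝ V]

lemma wt_nonneg (Δ : Set V) (u : V) : 0 ≤ wt Δ u :=
  Real.sInf_nonneg fun _ hx => hx.1

lemma wt_le {Δ : Set V} {u : V} {ρ : ℝ} (hρ : 0 ≤ ρ) (h : u ∈ ρ • Δ) : wt Δ u ≤ ρ :=
  csInf_le ⟨0, fun _ hx => hx.1⟩ ⟨hρ, h⟩

lemma wt_zero {Δ : Set V} (h0 : (0 : V) ∈ Δ) : wt Δ 0 = 0 :=
  le_antisymm (wt_le le_rfl ⟨0, h0, by simp⟩) (wt_nonneg Δ 0)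

lemma wt_mem {Δ : Set V} (hΔ : IsCompact Δ) {u : V} (hu : u ∈ rcone Δ) :
    u ∈ wt Δ u • Δ := by
  obtain ⟨ρ₀, hρ₀, s, hs, rfl⟩ := hu
  set S : Set ℝ := {ρ : ℝ | 0 ≤ ρ ∧ ρ₀ • s ∈ ρ • Δ} with hS
  have hρ₀S : ρ₀ ∈ S := ⟨hρ₀, ⟨s, hs, rfl⟩⟩
  set T : Set (ℝ × V) := (Icc 0 ρ₀ ×ˢ Δ) ∩ {p : ℝ × V | p.1 • p.2 = ρ₀ • s} with hT
  have hTcomp : IsCompact T :=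
    ((isCompact_Icc.prod hΔ).inter_right
      (isClosed_eq (continuous_fst.smul continuous_snd) continuous_const))
  have hKcomp : IsCompact (Prod.fst '' T) := hTcomp.image continuous_fst
  have hKne : (Prod.fst '' T).Nonempty := ⟨ρ₀, ⟨(ρ₀, s), ⟨⟨⟨hρ₀, le_rfl⟩, hs⟩, rfl⟩, rfl⟩⟩
  have hmem := hKcomp.sInf_mem hKne
  have hKS : Prod.fst '' T ⊆ S := by
    rintro ρ ⟨⟨ρ', x⟩, ⟨⟨⟨hx0, _⟩, hxΔ⟩, hsm⟩, rfl⟩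
    exact ⟨hx0, ⟨x, hxΔ, hsm⟩⟩
  have heq : wt Δ (ρ₀ • s) = sInf (Prod.fst '' T) := by
    apply le_antisymm
    · exact csInf_le_csInf ⟨0, fun _ hx => hx.1⟩ hKne hKS
    · apply le_csInf ⟨ρ₀, hρ₀S⟩
      rintro ρ ⟨h0ρ, x, hxΔ, hsm⟩
      rcases le_total ρ ρ₀ with h | h
      · exact csInf_le hKcomp.bddBelow ⟨(ρ, x), ⟨⟨⟨h0ρ, h⟩, hxΔ⟩, hsm⟩, rfl⟩
      · exact le_trans (csInf_le hKcomp.bddBelow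
          ⟨(ρ₀, s), ⟨⟨⟨hρ₀, le_rfl⟩, hs⟩, rfl⟩, rfl⟩) h
  rw [heq]
  exact (hKS hmem).2

/-- Arithmetic: a common refinement of two denominators passes to their gcd. -/
lemma exists_nat_div_gcd {w : ℝ} (hw : 0 ≤ w) {D D' : ℕ} (hD : 0 < D) (hD' : 0 < D')
    {a b : ℕ} (ha : w = (a : ℝ) / D) (hb : w = (b : ℝ) / D') :
    ∃ m : ℕ, w = (m : ℝ) / (Nat.gcd D D') := by
  have hg : 0 < Nat.gcd D D' := Nat.gcd_pos_of_pos_left _ hD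
  have hbez : ((Nat.gcd D D' : ℤ) : ℝ) = (D : ℝ) * (Nat.gcdA D D' : ℝ) + (D' : ℝ) * (Nat.gcdB D D' : ℝ) := by
    have := Nat.gcd_eq_gcd_ab D D'
    exact_mod_cast congrArg (fun z : ℤ => (z : ℝ)) this
  set z : ℤ := (a : ℤ) * Nat.gcdA D D' + (b : ℤ) * Nat.gcdB D D' with hz
  have hwD : w * D = a := by
    rw [ha]; field_simp
  have hwD' : w * D' = b := by
    rw [hb]; field_simp
  have hkey : w * (Nat.gcd D D' : ℝ) = (z : ℝ) := by
    push_cast [hz]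
    push_cast at hbez
    rw [hbez]
    linear_combination hwD * ((Nat.gcdA D D' : ℤ) : ℝ) + hwD' * ((Nat.gcdB D D' : ℤ) : ℝ)
  have hz0 : 0 ≤ z := by
    have : (0 : ℝ) ≤ (z : ℝ) := by
      rw [← hkey]; positivity
    exact_mod_cast this
  refine ⟨z.toNat, ?_⟩
  have hcast : ((z.toNat : ℤ) : ℝ) = (z : ℝ) := by exact_mod_cast Int.toNat_of_nonneg hz0
  rw [eq_div_iff (by exact_mod_cast hg.ne' : (Nat.gcd D D' : ℝ) ≠ 0)]
  push_cast at hcast ⊢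
  rw [hkey, hcast]

end Helpers

section DSumLemmas

variable {n₁ n₂ : ℕ} {Δ₁ : Set (Fin n₁ → ℝ)} {Δ₂ : Set (Fin n₂ → ℝ)}

lemma coe_inl_eq : (fun x : Fin n₁ → ℝ => (x, (0 : Fin n₂ → ℝ))) =
    ⇑(LinearMap.inl ℝ (Fin n₁ → ℝ) (Fin n₂ → ℝ)) := rfl

lemma coe_inr_eq : (fun y : Fin n₂ → ℝ => ((0 : Fin n₁ → ℝ), y)) =
    ⇑(LinearMap.inr ℝ (Fin n₁ → ℝ) (Fin n₂ → ℝ)) := rfl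

lemma mem_dSum_iff (hc₁ : Convex ℝ Δ₁) (hc₂ : Convex ℝ Δ₂)
    (h1 : Δ₁.Nonempty) (h2 : Δ₂.Nonempty) {z : (Fin n₁ → ℝ) × (Fin n₂ → ℝ)} :
    z ∈ dSum Δ₁ Δ₂ ↔ ∃ t₁ t₂ : ℝ, 0 ≤ t₁ ∧ 0 ≤ t₂ ∧ t₁ + t₂ = 1 ∧
      ∃ a ∈ Δ₁, ∃ b ∈ Δ₂, z = (t₁ • a, t₂ • b) := by
  have hA : Convex ℝ ((fun x : Fin n₁ → ℝ => (x, (0 : Fin n₂ → ℝ))) '' Δ₁) := by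
    rw [coe_inl_eq]; exact hc₁.linear_image _
  have hB : Convex ℝ ((fun y : Fin n₂ → ℝ => ((0 : Fin n₁ → ℝ), y)) '' Δ₂) := by
    rw [coe_inr_eq]; exact hc₂.linear_image _
  rw [dSum, convexHull_union (h1.image _) (h2.image _), hA.convexHull_eq, hB.convexHull_eq,
    mem_convexJoin]
  constructor
  · rintro ⟨-, ⟨a, ha, rfl⟩, -, ⟨b, hb, rfl⟩, t₁, t₂, ht₁, ht₂, hsum, rfl⟩
    exact ⟨t₁, t₂, ht₁, ht₂, hsum, a, ha, b, hb, by
      simp [Prod.ext_iff]⟩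
  · rintro ⟨t₁, t₂, ht₁, ht₂, hsum, a, ha, b, hb, rfl⟩
    exact ⟨(a, 0), ⟨a, ha, rfl⟩, (0, b), ⟨b, hb, rfl⟩, t₁, t₂, ht₁, ht₂, hsum, by
      simp [Prod.ext_iff]⟩

lemma rcone_dSum_proj (hc₁ : Convex ℝ Δ₁) (hc₂ : Convex ℝ Δ₂)
    (h1 : Δ₁.Nonempty) (h2 : Δ₂.Nonempty) {u : (Fin n₁ → ℝ) × (Fin n₂ → ℝ)}
    (hu : u ∈ rcone (dSum Δ₁ Δ₂)) : u.1 ∈ rcone Δ₁ ∧ u.2 ∈ rcone Δ₂ := by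
  obtain ⟨ρ, hρ, z, hz, rfl⟩ := hu
  rw [mem_dSum_iff hc₁ hc₂ h1 h2] at hz
  obtain ⟨t₁, t₂, ht₁, ht₂, hsum, a, ha, b, hb, rfl⟩ := hz
  constructor
  · exact ⟨ρ * t₁, by positivity, a, ha, by simp [smul_smul]⟩
  · exact ⟨ρ * t₂, by positivity, b, hb, by simp [smul_smul]⟩

lemma inl_mem_rcone_dSum {u₁ : Fin n₁ → ℝ} (hu : u₁ ∈ rcone Δ₁) :
    ((u₁, (0 : Fin n₂ → ℝ))) ∈ rcone (dSum Δ₁ Δ₂) := by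
  obtain ⟨ρ, hρ, a, ha, rfl⟩ := hu
  exact ⟨ρ, hρ, (a, 0), subset_convexHull _ _ (Or.inl ⟨a, ha, rfl⟩), by
    simp [Prod.ext_iff]⟩

lemma inr_mem_rcone_dSum {u₂ : Fin n₂ → ℝ} (hu : u₂ ∈ rcone Δ₂) :
    (((0 : Fin n₁ → ℝ), u₂)) ∈ rcone (dSum Δ₁ Δ₂) := by
  obtain ⟨ρ, hρ, b, hb, rfl⟩ := hu
  exact ⟨ρ, hρ, (0, b), subset_convexHull _ _ (Or.inr ⟨b, hb, rfl⟩), by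
    simp [Prod.ext_iff]⟩

lemma zero_mem_rcone {V : Type*} [AddCommGroup V] [Module ℝ V] {Δ : Set V}
    (h0 : (0 : V) ∈ Δ) : (0 : V) ∈ rcone Δ :=
  ⟨1, zero_le_one, 0, h0, (smul_zero 1).symm⟩

lemma wt_dSum (hc₁ : Convex ℝ Δ₁) (hc₂ : Convex ℝ Δ₂)
    (hcomp₁ : IsCompact Δ₁) (hcomp₂ : IsCompact Δ₂)
    (h0₁ : (0 : Fin n₁ → ℝ) ∈ Δ₁) (h0₂ : (0 : Fin n₂ → ℝ) ∈ Δ₂)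
    {u₁ : Fin n₁ → ℝ} {u₂ : Fin n₂ → ℝ}
    (hu₁ : u₁ ∈ rcone Δ₁) (hu₂ : u₂ ∈ rcone Δ₂) :
    wt (dSum Δ₁ Δ₂) (u₁, u₂) = wt Δ₁ u₁ + wt Δ₂ u₂ := by
  have h1 : Δ₁.Nonempty := ⟨0, h0₁⟩
  have h2 : Δ₂.Nonempty := ⟨0, h0₂⟩
  set r₁ := wt Δ₁ u₁ with hr₁def
  set r₂ := wt Δ₂ u₂ with hr₂def
  have hr₁ : 0 ≤ r₁ := wt_nonneg _ _
  have hr₂ : 0 ≤ r₂ := wt_nonneg _ _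
  obtain ⟨x₁, hx₁, hx₁e⟩ := Set.mem_smul_set.mp (wt_mem hcomp₁ hu₁)
  obtain ⟨x₂, hx₂, hx₂e⟩ := Set.mem_smul_set.mp (wt_mem hcomp₂ hu₂)
  have hle : (u₁, u₂) ∈ (r₁ + r₂) • dSum Δ₁ Δ₂ := by
    rcases eq_or_lt_of_le (add_nonneg hr₁ hr₂) with h | h
    · have hr₁0 : r₁ = 0 := by linarith
      have hr₂0 : r₂ = 0 := by linarith
      have hu₁0 : u₁ = 0 := by rw [← hx₁e, ← hr₁def, hr₁0, zero_smul]
      have hu₂0 : u₂ = 0 := by rw [← hx₂e, ← hr₂def, hr₂0, zero_smul]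
      refine Set.mem_smul_set.mpr ⟨((0 : Fin n₁ → ℝ), (0 : Fin n₂ → ℝ)), ?_, ?_⟩
      · exact subset_convexHull _ _ (Or.inl ⟨0, h0₁, rfl⟩)
      · rw [hu₁0, hu₂0]; simp
    · refine Set.mem_smul_set.mpr
        ⟨((r₁ / (r₁ + r₂)) • x₁, (r₂ / (r₁ + r₂)) • x₂), ?_, ?_⟩
      · rw [mem_dSum_iff hc₁ hc₂ h1 h2]
        exact ⟨r₁ / (r₁ + r₂), r₂ / (r₁ + r₂), by positivity, by positivity,
          by field_simp, x₁, hx₁, x₂, hx₂, rfl⟩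
      · rw [Prod.smul_mk, smul_smul, smul_smul, mul_div_cancel₀ _ h.ne',
          mul_div_cancel₀ _ h.ne', hx₁e, hx₂e]
  apply le_antisymm
  · exact wt_le (add_nonneg hr₁ hr₂) hle
  · have key : ∀ ρ ∈ {ρ : ℝ | 0 ≤ ρ ∧ (u₁, u₂) ∈ ρ • dSum Δ₁ Δ₂}, r₁ + r₂ ≤ ρ := by
      rintro ρ ⟨hρ0, hρ⟩
      obtain ⟨z, hz, hze⟩ := Set.mem_smul_set.mp hρ
      rw [mem_dSum_iff hc₁ hc₂ h1 h2] at hz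
      obtain ⟨t₁, t₂, ht₁, ht₂, hsum, a, ha, b, hb, rfl⟩ := hz
      have e₁ : (ρ * t₁) • a = u₁ := by
        have := congrArg Prod.fst hze
        simpa [smul_smul] using this
      have e₂ : (ρ * t₂) • b = u₂ := by
        have := congrArg Prod.snd hze
        simpa [smul_smul] using this
      have l₁ : r₁ ≤ ρ * t₁ := wt_le (by positivity) ⟨a, ha, e₁⟩
      have l₂ : r₂ ≤ ρ * t₂ := wt_le (by positivity) ⟨b, hb, e₂⟩
      have : ρ * t₁ + ρ * t₂ = ρ := by rw [← mul_add, hsum, mul_one]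
      linarith
    exact le_csInf ⟨r₁ + r₂, ⟨add_nonneg hr₁ hr₂, hle⟩⟩ key

end DSumLemmas

theorem stmt6 {n₁ n₂ : ℕ} (Δ₁ : Set (Fin n₁ → ℝ)) (Δ₂ : Set (Fin n₂ → ℝ)) (D₁ D₂ : ℕ)
    (h₁ : IsIntegralPolytope isIntVec Δ₁) (h₂ : IsIntegralPolytope isIntVec Δ₂)
    (h0₁ : (0 : Fin n₁ → ℝ) ∈ Δ₁) (h0₂ : (0 : Fin n₂ → ℝ) ∈ Δ₂)
    (hD₁ : IsDenomWith isIntVec Δ₁ D₁) (hD₂ : IsDenomWith isIntVec Δ₂ D₂) :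
    IsDenomWith (fun p => isIntVec p.1 ∧ isIntVec p.2) (dSum Δ₁ Δ₂) (Nat.lcm D₁ D₂) := by
  obtain ⟨s₁, -, hΔ₁⟩ := h₁
  obtain ⟨s₂, -, hΔ₂⟩ := h₂
  have hc₁ : Convex ℝ Δ₁ := hΔ₁ ▸ convex_convexHull ℝ _
  have hc₂ : Convex ℝ Δ₂ := hΔ₂ ▸ convex_convexHull ℝ _
  have hcomp₁ : IsCompact Δ₁ := hΔ₁ ▸ (s₁.finite_toSet).isCompact_convexHull (𝕜 := ℝ)
  have hcomp₂ : IsCompact Δ₂ := hΔ₂ ▸ (s₂.finite_toSet).isCompact_convexHull (𝕜 := ℝ)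
  have h1 : Δ₁.Nonempty := ⟨0, h0₁⟩
  have h2 : Δ₂.Nonempty := ⟨0, h0₂⟩
  have hLpos : 0 < Nat.lcm D₁ D₂ := Nat.lcm_pos hD₁.1 hD₂.1
  refine ⟨hLpos, ?_, ?_⟩
  · rintro ⟨u₁, u₂⟩ hu ⟨hi₁, hi₂⟩
    obtain ⟨hu₁, hu₂⟩ := rcone_dSum_proj hc₁ hc₂ h1 h2 hu
    obtain ⟨m₁, hm₁⟩ := hD₁.2.1 u₁ hu₁ hi₁
    obtain ⟨m₂, hm₂⟩ := hD₂.2.1 u₂ hu₂ hi₂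
    refine ⟨m₁ * (Nat.lcm D₁ D₂ / D₁) + m₂ * (Nat.lcm D₁ D₂ / D₂), ?_⟩
    rw [wt_dSum hc₁ hc₂ hcomp₁ hcomp₂ h0₁ h0₂ hu₁ hu₂, hm₁, hm₂]
    have e₁ : (Nat.lcm D₁ D₂ / D₁) * D₁ = Nat.lcm D₁ D₂ := Nat.div_mul_cancel (Nat.dvd_lcm_left _ _)
    have e₂ : (Nat.lcm D₁ D₂ / D₂) * D₂ = Nat.lcm D₁ D₂ := Nat.div_mul_cancel (Nat.dvd_lcm_right _ _)
    have er₁ : ((Nat.lcm D₁ D₂ / D₁ : ℕ) : ℝ) * (D₁ : ℝ) = (Nat.lcm D₁ D₂ : ℝ) := by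
      exact_mod_cast congrArg (Nat.cast (R := ℝ)) e₁
    have er₂ : ((Nat.lcm D₁ D₂ / D₂ : ℕ) : ℝ) * (D₂ : ℝ) = (Nat.lcm D₁ D₂ : ℝ) := by
      exact_mod_cast congrArg (Nat.cast (R := ℝ)) e₂
    have hd₁0 : (D₁ : ℝ) ≠ 0 := Nat.cast_ne_zero.mpr hD₁.1.ne'
    have hd₂0 : (D₂ : ℝ) ≠ 0 := Nat.cast_ne_zero.mpr hD₂.1.ne'
    have hL0 : (Nat.lcm D₁ D₂ : ℝ) ≠ 0 := Nat.cast_ne_zero.mpr hLpos.ne'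
    field_simp
    push_cast
    linear_combination (-((m₁ : ℝ) * (D₂ : ℝ))) * er₁ + (-((m₂ : ℝ) * (D₁ : ℝ))) * er₂
  · intro D' hD' hval
    have val₁ : ∀ u ∈ rcone Δ₁, isIntVec u → ∃ m : ℕ, wt Δ₁ u = (m : ℝ) / D' := by
      intro u hu hi
      obtain ⟨m, hm⟩ := hval (u, 0) (inl_mem_rcone_dSum hu) ⟨hi, fun i => ⟨0, by simp⟩⟩
      refine ⟨m, ?_⟩
      rwa [wt_dSum hc₁ hc₂ hcomp₁ hcomp₂ h0₁ h0₂ hu (zero_mem_rcone h0₂),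
        wt_zero h0₂, add_zero] at hm
    have val₂ : ∀ u ∈ rcone Δ₂, isIntVec u → ∃ m : ℕ, wt Δ₂ u = (m : ℝ) / D' := by
      intro u hu hi
      obtain ⟨m, hm⟩ := hval (0, u) (inr_mem_rcone_dSum hu) ⟨fun i => ⟨0, by simp⟩, hi⟩
      refine ⟨m, ?_⟩
      rwa [wt_dSum hc₁ hc₂ hcomp₁ hcomp₂ h0₁ h0₂ (zero_mem_rcone h0₁) hu,
        wt_zero h0₁, zero_add] at hm
    have hdvd₁ : D₁ ∣ D' := by
      have hval_gcd : ∀ u ∈ rcone Δ₁, isIntVec u → ∃ m : ℕ, wt Δ₁ u = (m : ℝ) / (Nat.gcd D₁ D') := by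
        intro u hu hi
        obtain ⟨a, hA⟩ := hD₁.2.1 u hu hi
        obtain ⟨b, hB⟩ := val₁ u hu hi
        exact exists_nat_div_gcd (wt_nonneg _ _) hD₁.1 hD' hA hB
      have hle := hD₁.2.2 _ (Nat.gcd_pos_of_pos_left _ hD₁.1) hval_gcd
      have hge : Nat.gcd D₁ D' ≤ D₁ := Nat.gcd_le_left D' hD₁.1
      have hgcd : Nat.gcd D₁ D' = D₁ := le_antisymm hge hle
      rw [← hgcd]
      exact Nat.gcd_dvd_right D₁ D'
    have hdvd₂ : D₂ ∣ D' := by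
      have hval_gcd : ∀ u ∈ rcone Δ₂, isIntVec u → ∃ m : ℕ, wt Δ₂ u = (m : ℝ) / (Nat.gcd D₂ D') := by
        intro u hu hi
        obtain ⟨a, hA⟩ := hD₂.2.1 u hu hi
        obtain ⟨b, hB⟩ := val₂ u hu hi
        exact exists_nat_div_gcd (wt_nonneg _ _) hD₂.1 hD' hA hB
      have hle := hD₂.2.2 _ (Nat.gcd_pos_of_pos_left _ hD₂.1) hval_gcd
      have hge : Nat.gcd D₂ D' ≤ D₂ := Nat.gcd_le_left D' hD₂.1
      have hgcd : Nat.gcd D₂ D' = D₂ := le_antisymm hge hle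
      rw [← hgcd]
      exact Nat.gcd_dvd_right D₂ D'
    exact Nat.le_of_dvd hD' (Nat.lcm_dvd hdvd₁ hdvd₂)
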